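/- arXiv:2311.06490 — 2 statements merged into one kernel-verified Lean document; each statement's English description precedes it below -/
import Mathlib

section
/- Let G be a graph on vertices {1,...,n}. If X ⊆ V, Z = {i ∉ X : N_2(i) ∩ X = ∅}, and Y = {i ∉ X ∪ Z : N_2(i) ⊆ X ∪ Z}, then D = X ∪ Z ∪ Y is a 2-step restrained dominating set of G. -/
open Finset

noncomputable section
open scoped Classical

variable {n : ℕ}

/-- The set of vertices at distance exactly 2 from `i`. -/
def N2 (G : SimpleGraph (Fin n)) (i : Fin n) : Finset (Fin n) :=
  Finset.univ.filter (fun j => G.dist i j = 2)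

/-- The neighborhood of `i`. -/
def Nbr (G : SimpleGraph (Fin n)) (i : Fin n) : Finset (Fin n) :=
  Finset.univ.filter (fun j => G.Adj i j)

/-- Hop degree of a vertex. -/
def hopDeg (G : SimpleGraph (Fin n)) (i : Fin n) : ℕ := (N2 G i).card

/-- Minimum hop degree. -/
def minHopDeg (G : SimpleGraph (Fin n)) : ℕ := ⨅ i, hopDeg G i

/-- Minimum degree. -/
def minDeg (G : SimpleGraph (Fin n)) : ℕ := ⨅ i, (Nbr G i).card

def IsHopDomSet (G : SimpleGraph (Fin n)) (S : Finset (Fin n)) : Prop :=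
  ∀ u, u ∉ S → ∃ v ∈ S, G.dist u v = 2

def IsTwoStepDomSet (G : SimpleGraph (Fin n)) (S : Finset (Fin n)) : Prop :=
  ∀ u : Fin n, ∃ v ∈ S, G.dist u v = 2

def IsRestrainedHopDomSet (G : SimpleGraph (Fin n)) (S : Finset (Fin n)) : Prop :=
  IsHopDomSet G S ∧ ∀ u, u ∉ S → ∃ v, v ∉ S ∧ G.Adj u v

def IsTotalRestrainedHopDomSet (G : SimpleGraph (Fin n)) (S : Finset (Fin n)) : Prop :=
  IsTwoStepDomSet G S ∧ ∀ u, u ∉ S → ∃ v, v ∉ S ∧ G.Adj u v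

def IsTwoStepRestrainedDomSet (G : SimpleGraph (Fin n)) (S : Finset (Fin n)) : Prop :=
  IsHopDomSet G S ∧ ∀ u, u ∉ S → ∃ v, v ∉ S ∧ G.dist u v = 2

def IsTotalTwoStepRestrainedDomSet (G : SimpleGraph (Fin n)) (S : Finset (Fin n)) : Prop :=
  IsTwoStepDomSet G S ∧ ∀ u, u ∉ S → ∃ v, v ∉ S ∧ G.dist u v = 2

def hopDomNum (G : SimpleGraph (Fin n)) : ℕ :=
  sInf {k | ∃ S : Finset (Fin n), IsHopDomSet G S ∧ S.card = k}

def twoStepDomNum (G : SimpleGraph (Fin n)) : ℕ :=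
  sInf {k | ∃ S : Finset (Fin n), IsTwoStepDomSet G S ∧ S.card = k}

def rhDomNum (G : SimpleGraph (Fin n)) : ℕ :=
  sInf {k | ∃ S : Finset (Fin n), IsRestrainedHopDomSet G S ∧ S.card = k}

def trhDomNum (G : SimpleGraph (Fin n)) : ℕ :=
  sInf {k | ∃ S : Finset (Fin n), IsTotalRestrainedHopDomSet G S ∧ S.card = k}

def tsrDomNum (G : SimpleGraph (Fin n)) : ℕ :=
  sInf {k | ∃ S : Finset (Fin n), IsTwoStepRestrainedDomSet G S ∧ S.card = k}

def ttsrDomNum (G : SimpleGraph (Fin n)) : ℕ :=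
  sInf {k | ∃ S : Finset (Fin n), IsTotalTwoStepRestrainedDomSet G S ∧ S.card = k}

/-- The graph `Dist(G;2)` joining vertices at distance exactly 2 in `G`. -/
def dist2Graph (G : SimpleGraph (Fin n)) : SimpleGraph (Fin n) where
  Adj u v := u ≠ v ∧ G.dist u v = 2
  symm := by
    constructor
    intro u v h
    exact ⟨h.1.symm, by rw [SimpleGraph.dist_comm]; exact h.2⟩
  loopless := ⟨fun v h => h.1 rfl⟩

def domNum (H : SimpleGraph (Fin n)) : ℕ :=
  sInf {k | ∃ S : Finset (Fin n), (∀ u, u ∉ S → ∃ v ∈ S, H.Adj u v) ∧ S.card = k}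

def totalDomNum (H : SimpleGraph (Fin n)) : ℕ :=
  sInf {k | ∃ S : Finset (Fin n), (∀ u : Fin n, ∃ v ∈ S, H.Adj u v) ∧ S.card = k}

/-- Matching number: maximum number of edges in a matching. -/
def matchingNum (G : SimpleGraph (Fin n)) : ℕ :=
  sSup {k | ∃ M : SimpleGraph.Subgraph G, M.IsMatching ∧ M.edgeSet.ncard = k}

/-- A hop matching: a set of paths of length two, no two of which share an end vertex. -/
def IsHopMatching (G : SimpleGraph (Fin n)) (H : Finset (Fin n × Fin n × Fin n)) : Prop :=
  (∀ t ∈ H, G.Adj t.1 t.2.1 ∧ G.Adj t.2.1 t.2.2 ∧ t.1 ≠ t.2.2) ∧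
  ∀ t ∈ H, ∀ t' ∈ H, t ≠ t' →
    t.1 ≠ t'.1 ∧ t.1 ≠ t'.2.2 ∧ t.2.2 ≠ t'.1 ∧ t.2.2 ≠ t'.2.2

/-- Hop matching number. -/
def hopMatchingNum (G : SimpleGraph (Fin n)) : ℕ :=
  sSup {k | ∃ H : Finset (Fin n × Fin n × Fin n), IsHopMatching G H ∧ H.card = k}

def frh (G : SimpleGraph (Fin n)) (p : Fin n → ℝ) : ℝ :=
  (∑ i, p i) + (∑ i, (1 - p i) * ∏ j ∈ N2 G i, (1 - p j)) +
  ∑ i, (1 - p i) * (1 - (1 - p i) * ∏ j ∈ N2 G i, (1 - p j)) *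
    ∏ j ∈ Nbr G i, (p j + (1 - p j) * ∏ k ∈ N2 G j, (1 - p k))

def f2sr (G : SimpleGraph (Fin n)) (p : Fin n → ℝ) : ℝ :=
  (∑ i, p i) + (∑ i, (1 - p i) * ∏ j ∈ N2 G i, (1 - p j)) +
  ∑ i, (1 - p i) * (1 - (1 - p i) * ∏ j ∈ N2 G i, (1 - p j)) *
    ∏ j ∈ N2 G i, (p j + (1 - p j) * ∏ k ∈ N2 G j, (1 - p k))

def ZSet (G : SimpleGraph (Fin n)) (X : Finset (Fin n)) : Finset (Fin n) :=
  Finset.univ.filter (fun i => i ∉ X ∧ N2 G i ∩ X = ∅)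

def YSet (G : SimpleGraph (Fin n)) (X : Finset (Fin n)) : Finset (Fin n) :=
  Finset.univ.filter (fun i => i ∉ X ∪ ZSet G X ∧ Nbr G i ⊆ X ∪ ZSet G X)

def DSet (G : SimpleGraph (Fin n)) (X : Finset (Fin n)) : Finset (Fin n) :=
  X ∪ ZSet G X ∪ YSet G X

theorem stmt15 {n : ℕ} (G : SimpleGraph (Fin n)) (X Z Y : Finset (Fin n))
    (hZ : Z = Finset.univ.filter (fun i => i ∉ X ∧ N2 G i ∩ X = ∅))
    (hY : Y = Finset.univ.filter (fun i => i ∉ X ∪ Z ∧ N2 G i ⊆ X ∪ Z)) :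
    IsTwoStepRestrainedDomSet G (X ∪ Z ∪ Y) := by
  subst hZ hY
  constructor
  · intro u hu
    simp only [Finset.mem_union, Finset.mem_filter, Finset.mem_univ, true_and, not_or] at hu
    obtain ⟨⟨hX, hZ'⟩, _⟩ := hu
    have h : N2 G u ∩ X ≠ ∅ := fun h => hZ' ⟨hX, h⟩
    obtain ⟨v, hv⟩ := Finset.nonempty_iff_ne_empty.mpr h
    rw [Finset.mem_inter] at hv
    have hvd : G.dist u v = 2 := by
      have := hv.1; simp only [N2, Finset.mem_filter] at this; exact this.2
    exact ⟨v, by simp [hv.2], hvd⟩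
  · intro u hu
    simp only [Finset.mem_union, Finset.mem_filter, Finset.mem_univ, true_and, not_or] at hu
    obtain ⟨⟨hX, hZ'⟩, hY'⟩ := hu
    have huXZ : u ∉ X ∪ Finset.univ.filter (fun i => i ∉ X ∧ N2 G i ∩ X = ∅) := by
      simp only [Finset.mem_union, Finset.mem_filter, Finset.mem_univ, true_and, not_or]
      exact ⟨hX, hZ'⟩
    have h : ¬ N2 G u ⊆ X ∪ Finset.univ.filter (fun i => i ∉ X ∧ N2 G i ∩ X = ∅) :=
      fun h => hY' ⟨⟨hX, hZ'⟩, h⟩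
    obtain ⟨v, hvN, hvnot⟩ := Finset.not_subset.mp h
    have hvd : G.dist u v = 2 := by
      simp only [N2, Finset.mem_filter] at hvN; exact hvN.2
    refine ⟨v, ?_, hvd⟩
    simp only [Finset.mem_union, Finset.mem_filter, Finset.mem_univ, true_and, not_or] at hvnot ⊢
    refine ⟨hvnot, fun ⟨hv1, hv2⟩ => ?_⟩
    have : u ∈ N2 G v := by
      simp only [N2, Finset.mem_filter, Finset.mem_univ, true_and]
      rw [SimpleGraph.dist_comm]; exact hvd
    exact huXZ (hv2 this)
end
end

section
/- If G is a graph of order n with δ_h ≥ 1 and n < δ_h²/(ln δ_h + 1), then γ_{2sr}(G) ≤ ((ln(δ_h + 1) + 1)/(δ_h + 1)) · n and γ_{t2sr}(G) ≤ ((ln δ_h + 1)/δ_h) · n. -/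
open Finset

noncomputable section
open scoped Classical

variable {n : ℕ}

namespace Stmt18Aux

variable {n : ℕ}

lemma expand_sum (f h : Fin n → ℝ) :
    ∑ S : Finset (Fin n), ∏ i, (if i ∈ S then f i else h i) = ∏ i, (f i + h i) := by
  rw [Finset.prod_add, ← Finset.powerset_univ]
  refine Finset.sum_congr rfl fun S hS => ?_
  rw [Finset.prod_ite]
  congr 1
  · exact Finset.prod_congr (by ext i; simp) fun _ _ => rfl
  · exact Finset.prod_congr (by ext i; simp) fun _ _ => rfl

private def w (p : ℝ) (S : Finset (Fin n)) : ℝ := ∏ i, (if i ∈ S then p else 1 - p)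

lemma w_nonneg {p : ℝ} (hp0 : 0 ≤ p) (hp1 : p ≤ 1) (S : Finset (Fin n)) :
    0 ≤ w p S :=
  Finset.prod_nonneg fun i _ => by split <;> linarith

lemma sum_w (p : ℝ) : ∑ S : Finset (Fin n), w p S = 1 := by
  unfold w
  rw [expand_sum]
  simp

lemma sum_w_mem (p : ℝ) (i0 : Fin n) :
    ∑ S : Finset (Fin n), w p S * (if i0 ∈ S then (1:ℝ) else 0) = p := by
  have key : ∀ S : Finset (Fin n), w p S * (if i0 ∈ S then (1:ℝ) else 0)
      = ∏ i, (if i ∈ S then p else (if i = i0 then 0 else 1 - p)) := by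
    intro S
    by_cases h : i0 ∈ S
    · rw [if_pos h, mul_one]
      exact Finset.prod_congr rfl fun i _ => by
        by_cases hi : i ∈ S
        · simp [hi]
        · have hne : i ≠ i0 := fun e => hi (e ▸ h)
          simp [hi, hne]
    · rw [if_neg h, mul_zero]
      exact (Finset.prod_eq_zero (Finset.mem_univ i0) (by simp [h])).symm
  rw [Finset.sum_congr rfl fun S _ => key S, expand_sum]
  have h2 : ∀ i : Fin n, (p + (if i = i0 then 0 else 1 - p)) = (if i = i0 then p else 1) := by
    intro i; split <;> ring
  rw [Finset.prod_congr rfl fun i _ => h2 i]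
  simp

lemma sum_w_card (p : ℝ) :
    ∑ S : Finset (Fin n), w p S * (S.card : ℝ) = n * p := by
  have h1 : ∀ S : Finset (Fin n), (S.card : ℝ) = ∑ i : Fin n, (if i ∈ S then (1:ℝ) else 0) := by
    intro S; simp
  calc ∑ S : Finset (Fin n), w p S * (S.card : ℝ)
      = ∑ S : Finset (Fin n), ∑ i : Fin n, w p S * (if i ∈ S then (1:ℝ) else 0) := by
        refine Finset.sum_congr rfl fun S _ => ?_
        rw [h1 S, Finset.mul_sum]
    _ = ∑ i : Fin n, ∑ S : Finset (Fin n), w p S * (if i ∈ S then (1:ℝ) else 0) :=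
        Finset.sum_comm
    _ = ∑ i : Fin n, p := Finset.sum_congr rfl fun i _ => sum_w_mem p i
    _ = n * p := by simp [mul_comm]

lemma sum_w_disj (p : ℝ) (T : Finset (Fin n)) :
    ∑ S : Finset (Fin n), w p S * (if T ∩ S = ∅ then (1:ℝ) else 0) = (1 - p) ^ T.card := by
  have key : ∀ S : Finset (Fin n), w p S * (if T ∩ S = ∅ then (1:ℝ) else 0)
      = ∏ i, (if i ∈ S then (if i ∈ T then 0 else p) else 1 - p) := by
    intro S
    by_cases h : T ∩ S = ∅
    · rw [if_pos h, mul_one]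
      refine Finset.prod_congr rfl fun i _ => ?_
      by_cases hi : i ∈ S
      · have hiT : i ∉ T := fun hT =>
          (Finset.eq_empty_iff_forall_notMem.mp h i (Finset.mem_inter.mpr ⟨hT, hi⟩))
        simp [hi, hiT]
      · simp [hi]
    · rw [if_neg h, mul_zero]
      obtain ⟨i, hi⟩ := Finset.nonempty_iff_ne_empty.mpr h
      obtain ⟨hiT, hiS⟩ := Finset.mem_inter.mp hi
      exact (Finset.prod_eq_zero (Finset.mem_univ i) (by simp [hiS, hiT])).symm
  rw [Finset.sum_congr rfl fun S _ => key S, expand_sum]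
  have h2 : ∀ i : Fin n, ((if i ∈ T then (0:ℝ) else p) + (1 - p)) = (if i ∈ T then 1 - p else 1) := by
    intro i; split <;> ring
  rw [Finset.prod_congr rfl fun i _ => h2 i, Finset.prod_ite_mem, Finset.univ_inter,
    Finset.prod_const]

lemma main_avg (p : ℝ) (hp0 : 0 ≤ p) (hp1 : p ≤ 1) (T : Fin n → Finset (Fin n)) :
    ∃ S : Finset (Fin n),
      (S.card : ℝ) + ((Finset.univ.filter fun v => T v ∩ S = ∅).card : ℝ)
        ≤ n * p + ∑ v : Fin n, (1 - p) ^ (T v).card := by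
  set val : Finset (Fin n) → ℝ :=
    fun S => (S.card : ℝ) + ((Finset.univ.filter fun v => T v ∩ S = ∅).card : ℝ) with hval
  have hcardf : ∀ S : Finset (Fin n),
      ((Finset.univ.filter fun v => T v ∩ S = ∅).card : ℝ)
        = ∑ v : Fin n, (if T v ∩ S = ∅ then (1:ℝ) else 0) := by
    intro S
    rw [Finset.card_filter]
    push_cast
    exact Finset.sum_congr rfl fun v _ => by split <;> simp
  have hE : ∑ S : Finset (Fin n), w p S * val S
      = n * p + ∑ v : Fin n, (1 - p) ^ (T v).card := by
    have hsplit : ∀ S : Finset (Fin n), w p S * val S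
        = w p S * (S.card : ℝ) + ∑ v : Fin n, w p S * (if T v ∩ S = ∅ then (1:ℝ) else 0) := by
      intro S
      rw [hval]
      dsimp only
      rw [mul_add, hcardf S, Finset.mul_sum]
    rw [Finset.sum_congr rfl fun S _ => hsplit S, Finset.sum_add_distrib, sum_w_card p,
      Finset.sum_comm]
    congr 1
    exact Finset.sum_congr rfl fun v _ => sum_w_disj p (T v)
  by_contra hc
  push_neg at hc
  have hpos : ∃ S : Finset (Fin n), 0 < w p S := by
    by_contra h2
    push_neg at h2
    have h3 := sum_w (n := n) p
    rw [Finset.sum_eq_zero fun S _ => le_antisymm (h2 S) (w_nonneg hp0 hp1 S)] at h3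
    norm_num at h3
  obtain ⟨S0, hS0⟩ := hpos
  have hlt : ∑ S : Finset (Fin n), w p S * ((n:ℝ) * p + ∑ v : Fin n, (1 - p) ^ (T v).card)
      < ∑ S : Finset (Fin n), w p S * val S :=
    Finset.sum_lt_sum
      (fun S _ => mul_le_mul_of_nonneg_left (hc S).le (w_nonneg hp0 hp1 S))
      ⟨S0, Finset.mem_univ S0, mul_lt_mul_of_pos_left (hc S0) hS0⟩
  rw [hE, ← Finset.sum_mul, sum_w, one_mul] at hlt
  exact lt_irrefl _ hlt

end Stmt18Aux

namespace Stmt18Aux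
variable {n : ℕ}
lemma pow_one_sub_le (p : ℝ) (hp0 : 0 ≤ p) (hp1 : p ≤ 1) (m : ℕ) :
    (1 - p) ^ m ≤ Real.exp (-(p * m)) := by
  have h1 : (1 - p) ≤ Real.exp (-p) := by
    have := Real.add_one_le_exp (-p); linarith
  calc (1 - p) ^ m ≤ (Real.exp (-p)) ^ m := pow_le_pow_left₀ (by linarith) h1 m
    _ = Real.exp (-(p * m)) := by
      rw [← Real.exp_nat_mul]; congr 1; ring

lemma exists_dom (N : Fin n → Finset (Fin n)) (hNi : ∀ i, i ∉ N i)
    (p : ℝ) (hp0 : 0 ≤ p) (hp1 : p ≤ 1) (k : ℕ) (hk : ∀ i, k ≤ (N i).card) :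
    ∃ D : Finset (Fin n), (∀ u, u ∉ D → ∃ v ∈ D, v ∈ N u) ∧
      (D.card : ℝ) ≤ n * p + n * (1 - p) ^ (k + 1) := by
  obtain ⟨S, hS⟩ := main_avg p hp0 hp1 (fun v => insert v (N v))
  set B := Finset.univ.filter fun v => insert v (N v) ∩ S = ∅ with hB
  refine ⟨S ∪ B, ?_, ?_⟩
  · intro u hu
    have hu1 : u ∉ S := fun h => hu (Finset.mem_union_left _ h)
    have hu2 : u ∉ B := fun h => hu (Finset.mem_union_right _ h)
    have hne : insert u (N u) ∩ S ≠ ∅ := by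
      intro h; exact hu2 (by simp [hB, h])
    obtain ⟨v, hv⟩ := Finset.nonempty_iff_ne_empty.mpr hne
    obtain ⟨hv1, hv2⟩ := Finset.mem_inter.mp hv
    rcases Finset.mem_insert.mp hv1 with h | h
    · exact absurd (h ▸ hv2) hu1
    · exact ⟨v, Finset.mem_union_left _ hv2, h⟩
  · have h1 : ((S ∪ B).card : ℝ) ≤ (S.card : ℝ) + (B.card : ℝ) := by
      exact_mod_cast Finset.card_union_le S B
    have h2 : ∑ v : Fin n, (1 - p) ^ (insert v (N v)).card ≤ (n : ℝ) * (1 - p) ^ (k + 1) := by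
      calc ∑ v : Fin n, (1 - p) ^ (insert v (N v)).card
          ≤ ∑ _v : Fin n, (1 - p) ^ (k + 1) := by
            refine Finset.sum_le_sum fun v _ => ?_
            refine pow_le_pow_of_le_one (by linarith) (by linarith) ?_
            rw [Finset.card_insert_of_notMem (hNi v)]
            exact Nat.add_le_add_right (hk v) 1
        _ = n * (1 - p) ^ (k + 1) := by
            rw [Finset.sum_const, Finset.card_univ, Fintype.card_fin, nsmul_eq_mul]
    linarith [hS]

lemma exists_totdom (N : Fin n → Finset (Fin n))
    (p : ℝ) (hp0 : 0 ≤ p) (hp1 : p ≤ 1) (k : ℕ) (hk : ∀ i, k ≤ (N i).card) (hk1 : 1 ≤ k) :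
    ∃ D : Finset (Fin n), (∀ u, ∃ v ∈ D, v ∈ N u) ∧
      (D.card : ℝ) ≤ n * p + n * (1 - p) ^ k := by
  obtain ⟨S, hS⟩ := main_avg p hp0 hp1 N
  have hne : ∀ v, (N v).Nonempty := fun v =>
    Finset.card_pos.mp (by have := hk v; omega)
  choose f hf using hne
  set B := Finset.univ.filter fun v => N v ∩ S = ∅ with hB
  refine ⟨S ∪ B.image f, ?_, ?_⟩
  · intro u
    by_cases h : N u ∩ S = ∅
    · exact ⟨f u, Finset.mem_union_right _ (Finset.mem_image_of_mem f (by simp [hB, h])), hf u⟩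
    · obtain ⟨v, hv⟩ := Finset.nonempty_iff_ne_empty.mpr h
      obtain ⟨hv1, hv2⟩ := Finset.mem_inter.mp hv
      exact ⟨v, Finset.mem_union_left _ hv2, hv1⟩
  · have h1 : ((S ∪ B.image f).card : ℝ) ≤ (S.card : ℝ) + (B.card : ℝ) := by
      have := (Finset.card_union_le S (B.image f)).trans
        (Nat.add_le_add_left (Finset.card_image_le) _)
      exact_mod_cast this
    have h2 : ∑ v : Fin n, (1 - p) ^ (N v).card ≤ (n : ℝ) * (1 - p) ^ k := by
      calc ∑ v : Fin n, (1 - p) ^ (N v).card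
          ≤ ∑ _v : Fin n, (1 - p) ^ k := by
            refine Finset.sum_le_sum fun v _ => ?_
            exact pow_le_pow_of_le_one (by linarith) (by linarith) (hk v)
        _ = n * (1 - p) ^ k := by
            rw [Finset.sum_const, Finset.card_univ, Fintype.card_fin, nsmul_eq_mul]
    linarith [hS]


end Stmt18Aux

theorem stmt18 {n : ℕ} (G : SimpleGraph (Fin n)) (hδh : 1 ≤ minHopDeg G)
    (hn : (n : ℝ) < (minHopDeg G) ^ 2 / (Real.log (minHopDeg G) + 1)) :
    (tsrDomNum G : ℝ) ≤
        (Real.log (minHopDeg G + 1) + 1) / (minHopDeg G + 1) * n ∧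
      (ttsrDomNum G : ℝ) ≤
        (Real.log (minHopDeg G) + 1) / (minHopDeg G) * n := by
  classical
  set δn := minHopDeg G with hδndef
  have hδle : ∀ i, δn ≤ (N2 G i).card := fun i => ciInf_le (OrderBot.bddBelow _) i
  have hn0 : 0 < n := by
    rcases Nat.eq_zero_or_pos n with h | h
    · exfalso
      subst h
      have h0 : minHopDeg G = 0 := by
        simp [minHopDeg, iInf, Set.range_eq_empty, Nat.sInf_empty]
      omega
    · exact h
  have hδ2 : 2 ≤ δn := by
    by_contra h
    have h1 : δn = 1 := by omega
    rw [h1] at hn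
    norm_num at hn
    omega
  have hδR : (2 : ℝ) ≤ (δn : ℝ) := by exact_mod_cast hδ2
  have hδpos : (0 : ℝ) < (δn : ℝ) := by linarith
  have hlogδ : 0 ≤ Real.log (δn : ℝ) := Real.log_nonneg (by linarith)
  have hNi : ∀ i, i ∉ N2 G i := by
    intro i
    simp [N2, SimpleGraph.dist_self]
  -- Part 1
  have hlog1 : 0 ≤ Real.log ((δn : ℝ) + 1) := Real.log_nonneg (by linarith)
  set p1 : ℝ := Real.log ((δn : ℝ) + 1) / ((δn : ℝ) + 1) with hp1def
  have hp1_0 : 0 ≤ p1 := div_nonneg hlog1 (by linarith)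
  have hp1_1 : p1 ≤ 1 := by
    rw [hp1def, div_le_one (by linarith)]
    have := Real.log_le_sub_one_of_pos (show (0:ℝ) < (δn : ℝ) + 1 by linarith)
    linarith
  obtain ⟨D1, hD1dom, hD1card⟩ :=
    Stmt18Aux.exists_dom (fun i => N2 G i) hNi p1 hp1_0 hp1_1 δn hδle
  have hexp1 : ((1:ℝ) - p1) ^ (δn + 1) ≤ 1 / ((δn : ℝ) + 1) := by
    calc ((1:ℝ) - p1) ^ (δn + 1) ≤ Real.exp (-(p1 * ((δn + 1 : ℕ) : ℝ))) :=
          Stmt18Aux.pow_one_sub_le p1 hp1_0 hp1_1 (δn + 1)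
      _ = 1 / ((δn : ℝ) + 1) := by
          have hmul : p1 * ((δn + 1 : ℕ) : ℝ) = Real.log ((δn : ℝ) + 1) := by
            push_cast
            rw [hp1def]
            field_simp
          rw [hmul, Real.exp_neg, Real.exp_log (by linarith), one_div]
  have hB1 : (D1.card : ℝ) ≤ (Real.log ((δn : ℝ) + 1) + 1) / ((δn : ℝ) + 1) * n := by
    have hnn : (0:ℝ) ≤ (n : ℝ) := Nat.cast_nonneg n
    have h2 : (n : ℝ) * p1 + n * ((1:ℝ) - p1) ^ (δn + 1)
        ≤ n * p1 + n * (1 / ((δn : ℝ) + 1)) := by nlinarith [hexp1]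
    have h3 : (n : ℝ) * p1 + n * (1 / ((δn : ℝ) + 1))
        = (Real.log ((δn : ℝ) + 1) + 1) / ((δn : ℝ) + 1) * n := by
      rw [hp1def]
      field_simp
    linarith [hD1card]
  have hstep1 : (Real.log ((δn : ℝ) + 1) + 1) / ((δn : ℝ) + 1)
      * ((δn : ℝ) ^ 2 / (Real.log (δn : ℝ) + 1)) ≤ (δn : ℝ) := by
    rw [div_mul_div_comm, div_le_iff₀ (by positivity)]
    have hlt : Real.log ((δn : ℝ) + 1) ≤ Real.log (δn : ℝ) + 1 / (δn : ℝ) := by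
      have h := Real.log_le_sub_one_of_pos
        (show (0:ℝ) < ((δn : ℝ) + 1) / (δn : ℝ) by positivity)
      rw [Real.log_div (by linarith) (by linarith)] at h
      have h2 : ((δn : ℝ) + 1) / (δn : ℝ) - 1 = 1 / (δn : ℝ) := by field_simp; ring
      linarith
    have h3 : (1 / (δn : ℝ)) * (δn : ℝ) ^ 2 = (δn : ℝ) := by
      field_simp
    nlinarith [mul_le_mul_of_nonneg_right hlt (sq_nonneg (δn : ℝ)),
      mul_nonneg hδpos.le hlogδ]
  have c1pos : 0 < (Real.log ((δn : ℝ) + 1) + 1) / ((δn : ℝ) + 1) :=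
    div_pos (by linarith) (by linarith)
  have hlt1 : (Real.log ((δn : ℝ) + 1) + 1) / ((δn : ℝ) + 1) * n < (δn : ℝ) :=
    lt_of_lt_of_le (mul_lt_mul_of_pos_left hn c1pos) hstep1
  have hD1small : D1.card < δn := by
    have : (D1.card : ℝ) < (δn : ℝ) := lt_of_le_of_lt hB1 hlt1
    exact_mod_cast this
  have hres1 : ∀ u, u ∉ D1 → ∃ v, v ∉ D1 ∧ G.dist u v = 2 := by
    intro u _
    have hns : ¬(N2 G u ⊆ D1) := by
      intro hsub
      have h1 := Finset.card_le_card hsub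
      have h2 := hδle u
      omega
    obtain ⟨v, hv1, hv2⟩ := Finset.not_subset.mp hns
    refine ⟨v, hv2, ?_⟩
    simpa [N2] using hv1
  have hmem1 : tsrDomNum G ≤ D1.card := by
    apply Nat.sInf_le
    refine ⟨D1, ⟨?_, hres1⟩, rfl⟩
    intro u hu
    obtain ⟨v, hvD, hvN⟩ := hD1dom u hu
    exact ⟨v, hvD, by simpa [N2] using hvN⟩
  -- Part 2
  set p2 : ℝ := Real.log (δn : ℝ) / (δn : ℝ) with hp2def
  have hp2_0 : 0 ≤ p2 := div_nonneg hlogδ hδpos.le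
  have hp2_1 : p2 ≤ 1 := by
    rw [hp2def, div_le_one hδpos]
    have := Real.log_le_sub_one_of_pos hδpos
    linarith
  obtain ⟨D2, hD2dom, hD2card⟩ :=
    Stmt18Aux.exists_totdom (fun i => N2 G i) p2 hp2_0 hp2_1 δn hδle (by omega)
  have hexp2 : ((1:ℝ) - p2) ^ δn ≤ 1 / (δn : ℝ) := by
    calc ((1:ℝ) - p2) ^ δn ≤ Real.exp (-(p2 * ((δn : ℕ) : ℝ))) :=
          Stmt18Aux.pow_one_sub_le p2 hp2_0 hp2_1 δn
      _ = 1 / (δn : ℝ) := by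
          have hmul : p2 * ((δn : ℕ) : ℝ) = Real.log (δn : ℝ) := by
            rw [hp2def]
            field_simp
          rw [hmul, Real.exp_neg, Real.exp_log hδpos, one_div]
  have hB2 : (D2.card : ℝ) ≤ (Real.log (δn : ℝ) + 1) / (δn : ℝ) * n := by
    have hnn : (0:ℝ) ≤ (n : ℝ) := Nat.cast_nonneg n
    have h2 : (n : ℝ) * p2 + n * ((1:ℝ) - p2) ^ δn
        ≤ n * p2 + n * (1 / (δn : ℝ)) := by nlinarith [hexp2]
    have h3 : (n : ℝ) * p2 + n * (1 / (δn : ℝ))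
        = (Real.log (δn : ℝ) + 1) / (δn : ℝ) * n := by
      rw [hp2def]
      field_simp
    linarith [hD2card]
  have c2pos : 0 < (Real.log (δn : ℝ) + 1) / (δn : ℝ) := div_pos (by linarith) hδpos
  have hstep2 : (Real.log (δn : ℝ) + 1) / (δn : ℝ)
      * ((δn : ℝ) ^ 2 / (Real.log (δn : ℝ) + 1)) = (δn : ℝ) := by
    field_simp
  have hlt2 : (Real.log (δn : ℝ) + 1) / (δn : ℝ) * n < (δn : ℝ) := by
    calc (Real.log (δn : ℝ) + 1) / (δn : ℝ) * n
        < (Real.log (δn : ℝ) + 1) / (δn : ℝ) * ((δn : ℝ) ^ 2 / (Real.log (δn : ℝ) + 1)) :=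
          mul_lt_mul_of_pos_left hn c2pos
      _ = (δn : ℝ) := hstep2
  have hD2small : D2.card < δn := by
    have : (D2.card : ℝ) < (δn : ℝ) := lt_of_le_of_lt hB2 hlt2
    exact_mod_cast this
  have hres2 : ∀ u, u ∉ D2 → ∃ v, v ∉ D2 ∧ G.dist u v = 2 := by
    intro u _
    have hns : ¬(N2 G u ⊆ D2) := by
      intro hsub
      have h1 := Finset.card_le_card hsub
      have h2 := hδle u
      omega
    obtain ⟨v, hv1, hv2⟩ := Finset.not_subset.mp hns
    refine ⟨v, hv2, ?_⟩
    simpa [N2] using hv1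
  have hmem2 : ttsrDomNum G ≤ D2.card := by
    apply Nat.sInf_le
    refine ⟨D2, ⟨?_, hres2⟩, rfl⟩
    intro u
    obtain ⟨v, hvD, hvN⟩ := hD2dom u
    exact ⟨v, hvD, by simpa [N2] using hvN⟩
  constructor
  · calc (tsrDomNum G : ℝ) ≤ (D1.card : ℝ) := Nat.cast_le.mpr hmem1
      _ ≤ _ := hB1
  · calc (ttsrDomNum G : ℝ) ≤ (D2.card : ℝ) := Nat.cast_le.mpr hmem2
      _ ≤ _ := hB2
end
end
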